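/- Residual estimation error bound: under the conditions that the empirical second moment matrices Σ̂ and Σ̂₁ satisfy the multiplicative spectral approximation 1-ε ≤ λ_min^{1/2}(Σ^{-1/2}Σ̂Σ^{-1/2}) ≤ λ_max^{1/2}(Σ^{-1/2}Σ̂Σ^{-1/2}) ≤ 1+ε (and similarly for Σ̂₁ relative to Σ₁) with ε ≤ 1/2, the bias of the plug-in residual satisfies |⟨R̂Σ̂R̂μ, μ⟩ - ⟨RΣRμ, μ⟩| ≤ (1/8)·⟨RΣRμ, μ⟩ + O((λ_max(Σ)/λ_min²(Σ))·‖μ‖₂²·ε²), where μ = E[xy], R = D† - Σ^{-1}, R̂ = D̂† - Σ̂^{-1}, and D (resp. D̂) is the block matrix with top-left block Σ₁ (resp. Σ̂₁) and zeros elsewhere. -/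

import Mathlib

open MeasureTheory Matrix

noncomputable section

/-- Smallest eigenvalue of a Hermitian real matrix. -/
def specMin {d : ℕ} (A : Matrix (Fin d) (Fin d) ℝ) (hA : A.IsHermitian) : ℝ :=
  ⨅ i, hA.eigenvalues i

/-- Largest eigenvalue of a Hermitian real matrix. -/
def specMax {d : ℕ} (A : Matrix (Fin d) (Fin d) ℝ) (hA : A.IsHermitian) : ℝ :=
  ⨆ i, hA.eigenvalues i

/-- The square root of a positive semidefinite matrix, as `Matrix.PosSemidef.sqrt` was
defined in Mathlib (Dec 2024). -/
def posSemidefSqrt {n : Type*} [Fintype n] [DecidableEq n]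
    {A : Matrix n n ℝ} (hA : A.PosSemidef) : Matrix n n ℝ :=
  hA.1.eigenvectorUnitary.1 * diagonal ((↑) ∘ (√·) ∘ hA.1.eigenvalues) *
    (star hA.1.eigenvectorUnitary : Matrix n n ℝ)

set_option linter.unusedSectionVars false
set_option linter.unusedVariables false
set_option maxHeartbeats 1600000

namespace ResAux
variable {n : Type*} [Fintype n] [DecidableEq n]


lemma quad_psd {A : Matrix n n ℝ} (hA : A.PosSemidef) (x : n → ℝ) : 0 ≤ x ⬝ᵥ A *ᵥ x := by
  simpa using hA.dotProduct_mulVec_nonneg x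

lemma quad_le {A B : Matrix n n ℝ} (h : (B - A).PosSemidef) (x : n → ℝ) :
    x ⬝ᵥ A *ᵥ x ≤ x ⬝ᵥ B *ᵥ x := by
  have h2 := h.dotProduct_mulVec_nonneg x
  simp only [star_trivial, sub_mulVec, dotProduct_sub] at h2
  linarith

lemma transpose_eq {A : Matrix n n ℝ} (hA : A.IsHermitian) : Aᵀ = A := by
  ext i j
  have := congrFun (congrFun hA i) j
  simpa [conjTranspose_apply] using this

lemma dot_shift {A : Matrix n n ℝ} (hA : A.IsHermitian) (x y : n → ℝ) :
    x ⬝ᵥ A *ᵥ y = (A *ᵥ x) ⬝ᵥ y := by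
  rw [dotProduct_mulVec, ← mulVec_transpose, transpose_eq hA]

lemma psd_smul {A : Matrix n n ℝ} (hA : A.PosSemidef) {c : ℝ} (hc : 0 ≤ c) :
    (c • A).PosSemidef := by
  refine .of_dotProduct_mulVec_nonneg (by rw [IsHermitian, conjTranspose_smul, hA.1]; simp) fun x => ?_
  have := hA.dotProduct_mulVec_nonneg x
  rw [smul_mulVec, dotProduct_smul]
  exact smul_nonneg hc this

lemma dot_self_nonneg (u : n → ℝ) : 0 ≤ u ⬝ᵥ u :=
  Finset.sum_nonneg fun i _ => mul_self_nonneg _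

lemma nsq_sub_le (u v : n → ℝ) : (u - v) ⬝ᵥ (u - v) ≤ 2 * (u ⬝ᵥ u) + 2 * (v ⬝ᵥ v) := by
  have h := dot_self_nonneg (u + v)
  simp only [dotProduct_add, add_dotProduct, dotProduct_sub, sub_dotProduct] at *
  have hc : u ⬝ᵥ v = v ⬝ᵥ u := dotProduct_comm u v
  linarith


lemma diag_decomp {A : Matrix n n ℝ} (hA : A.IsHermitian) :
    A = (hA.eigenvectorUnitary : Matrix n n ℝ) * Matrix.diagonal hA.eigenvalues *
      (hA.eigenvectorUnitary : Matrix n n ℝ)ᴴ := by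
  have h := hA.spectral_theorem
  simpa [Matrix.star_eq_conjTranspose, Function.comp] using h

lemma unitary_mul_conjT {A : Matrix n n ℝ} (hA : A.IsHermitian) :
    (hA.eigenvectorUnitary : Matrix n n ℝ) * (hA.eigenvectorUnitary : Matrix n n ℝ)ᴴ = 1 := by
  have h := hA.eigenvectorUnitary.2
  rw [Matrix.mem_unitaryGroup_iff] at h
  simpa [Matrix.star_eq_conjTranspose] using h

lemma conjT_mul_unitary {A : Matrix n n ℝ} (hA : A.IsHermitian) :
    (hA.eigenvectorUnitary : Matrix n n ℝ)ᴴ * (hA.eigenvectorUnitary : Matrix n n ℝ) = 1 := by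
  have h := hA.eigenvectorUnitary.2
  rw [Matrix.mem_unitaryGroup_iff'] at h
  simpa [Matrix.star_eq_conjTranspose] using h

lemma psqrt_eq {A : Matrix n n ℝ} (hA : A.PosSemidef) :
    posSemidefSqrt hA = (hA.1.eigenvectorUnitary : Matrix n n ℝ) *
      Matrix.diagonal (fun i => √(hA.1.eigenvalues i)) *
        (hA.1.eigenvectorUnitary : Matrix n n ℝ)ᴴ := rfl

lemma psqrt_psd {A : Matrix n n ℝ} (hA : A.PosSemidef) : (posSemidefSqrt hA).PosSemidef := by
  rw [psqrt_eq]
  exact (Matrix.posSemidef_diagonal_iff.mpr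
    (fun i => Real.sqrt_nonneg _)).mul_mul_conjTranspose_same _

lemma psqrt_mul_self {A : Matrix n n ℝ} (hA : A.PosSemidef) :
    posSemidefSqrt hA * posSemidefSqrt hA = A := by
  rw [psqrt_eq]
  set U : Matrix n n ℝ := (hA.1.eigenvectorUnitary : Matrix n n ℝ) with hU
  set D : Matrix n n ℝ := Matrix.diagonal (fun i => √(hA.1.eigenvalues i)) with hD
  have hd : D * D = Matrix.diagonal hA.1.eigenvalues := by
    rw [hD, Matrix.diagonal_mul_diagonal]
    congr 1
    funext i
    exact Real.mul_self_sqrt (hA.eigenvalues_nonneg i)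
  calc U * D * Uᴴ * (U * D * Uᴴ) = U * D * (Uᴴ * U) * D * Uᴴ := by
        simp only [Matrix.mul_assoc]
    _ = U * (D * D) * Uᴴ := by rw [conjT_mul_unitary hA.1]; simp only [Matrix.mul_one,
        Matrix.mul_assoc]
    _ = A := by rw [hd]; exact (diag_decomp hA.1).symm

lemma psd_of_le_eig {A : Matrix n n ℝ} (hA : A.IsHermitian) {c : ℝ}
    (h : ∀ i, c ≤ hA.eigenvalues i) : (A - c • (1 : Matrix n n ℝ)).PosSemidef := by
  set U : Matrix n n ℝ := (hA.eigenvectorUnitary : Matrix n n ℝ) with hU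
  have key : A - c • (1 : Matrix n n ℝ) =
      U * Matrix.diagonal (fun i => hA.eigenvalues i - c) * Uᴴ := by
    have hd : Matrix.diagonal (fun i => hA.eigenvalues i - c)
        = Matrix.diagonal hA.eigenvalues - c • (1 : Matrix n n ℝ) := by
      ext i j
      by_cases hij : i = j <;> simp [Matrix.diagonal_apply, hij, Matrix.one_apply]
    rw [hd, Matrix.mul_sub, Matrix.sub_mul, ← diag_decomp hA]
    congr 1
    rw [mul_smul_comm, mul_one, smul_mul_assoc, unitary_mul_conjT hA]
  rw [key]
  exact (Matrix.posSemidef_diagonal_iff.mpr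
    (fun i => sub_nonneg.mpr (h i))).mul_mul_conjTranspose_same U

lemma psd_of_eig_le {A : Matrix n n ℝ} (hA : A.IsHermitian) {c : ℝ}
    (h : ∀ i, hA.eigenvalues i ≤ c) : (c • (1 : Matrix n n ℝ) - A).PosSemidef := by
  set U : Matrix n n ℝ := (hA.eigenvectorUnitary : Matrix n n ℝ) with hU
  have key : c • (1 : Matrix n n ℝ) - A =
      U * Matrix.diagonal (fun i => c - hA.eigenvalues i) * Uᴴ := by
    have hd : Matrix.diagonal (fun i => c - hA.eigenvalues i)
        = c • (1 : Matrix n n ℝ) - Matrix.diagonal hA.eigenvalues := by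
      ext i j
      by_cases hij : i = j <;> simp [Matrix.diagonal_apply, hij, Matrix.one_apply]
    rw [hd, Matrix.mul_sub, Matrix.sub_mul, ← diag_decomp hA]
    congr 1
    rw [mul_smul_comm, mul_one, smul_mul_assoc, unitary_mul_conjT hA]
  rw [key]
  exact (Matrix.posSemidef_diagonal_iff.mpr
    (fun i => sub_nonneg.mpr (h i))).mul_mul_conjTranspose_same U

lemma sq_eig_psd {A : Matrix n n ℝ} (hA : A.IsHermitian) {η : ℝ}
    (h : ∀ i, hA.eigenvalues i ^ 2 ≤ η ^ 2) :
    (η ^ 2 • (1 : Matrix n n ℝ) - A * A).PosSemidef := by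
  set U : Matrix n n ℝ := (hA.eigenvectorUnitary : Matrix n n ℝ) with hU
  set D : Matrix n n ℝ := Matrix.diagonal hA.eigenvalues with hD
  have hAA : A * A = U * (D * D) * Uᴴ := by
    conv_lhs => rw [diag_decomp hA]
    rw [← hU, ← hD]
    calc U * D * Uᴴ * (U * D * Uᴴ) = U * D * (Uᴴ * U) * D * Uᴴ := by
          simp only [Matrix.mul_assoc]
      _ = U * (D * D) * Uᴴ := by rw [conjT_mul_unitary hA]; simp only [Matrix.mul_one,
          Matrix.mul_assoc]
  have key : η ^ 2 • (1 : Matrix n n ℝ) - A * A =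
      U * Matrix.diagonal (fun i => η ^ 2 - hA.eigenvalues i ^ 2) * Uᴴ := by
    have hd : Matrix.diagonal (fun i => η ^ 2 - hA.eigenvalues i ^ 2)
        = η ^ 2 • (1 : Matrix n n ℝ) - D * D := by
      rw [hD, Matrix.diagonal_mul_diagonal]
      ext i j
      by_cases hij : i = j <;> simp [Matrix.diagonal_apply, hij, Matrix.one_apply, pow_two]
    rw [hd, Matrix.mul_sub, Matrix.sub_mul, hAA]
    congr 1
    rw [mul_smul_comm, mul_one, smul_mul_assoc, unitary_mul_conjT hA]
  rw [key]
  exact (Matrix.posSemidef_diagonal_iff.mpr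
    (fun i => sub_nonneg.mpr (h i))).mul_mul_conjTranspose_same U

lemma unit_norm_basis {A : Matrix n n ℝ} (hA : A.IsHermitian) (i : n) :
    (⇑(hA.eigenvectorBasis i) : n → ℝ) ⬝ᵥ ⇑(hA.eigenvectorBasis i) = 1 := by
  have h := hA.eigenvectorBasis.orthonormal.1 i
  have h2 : (inner ℝ (hA.eigenvectorBasis i) (hA.eigenvectorBasis i) : ℝ) = 1 := by
    rw [real_inner_self_eq_norm_sq, h]; norm_num
  rw [← h2, PiLp.inner_apply]
  simp [RCLike.inner_apply, dotProduct, mul_comm, pow_two]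

lemma eig_le_of_psd {A : Matrix n n ℝ} (hA : A.IsHermitian) {c : ℝ}
    (h : (c • (1 : Matrix n n ℝ) - A).PosSemidef) (i : n) : hA.eigenvalues i ≤ c := by
  have hv := unit_norm_basis hA i
  have h2 := h.dotProduct_mulVec_nonneg ⇑(hA.eigenvectorBasis i)
  have h3 := hA.eigenvalues_eq i
  simp only [star_trivial, sub_mulVec, dotProduct_sub, smul_mulVec, one_mulVec,
    dotProduct_smul, smul_eq_mul, hv, mul_one] at h2 h3
  rw [h3]
  simpa using h2

lemma le_eig_of_psd {A : Matrix n n ℝ} (hA : A.IsHermitian) {c : ℝ}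
    (h : (A - c • (1 : Matrix n n ℝ)).PosSemidef) (i : n) : c ≤ hA.eigenvalues i := by
  have hv := unit_norm_basis hA i
  have h2 := h.dotProduct_mulVec_nonneg ⇑(hA.eigenvectorBasis i)
  have h3 := hA.eigenvalues_eq i
  simp only [star_trivial, sub_mulVec, dotProduct_sub, smul_mulVec, one_mulVec,
    dotProduct_smul, smul_eq_mul, hv, mul_one] at h2 h3
  rw [h3]
  simpa using h2


-- copies (placeholders): in final file these are the real ones

/-- symmetric operator norm-type bound via eigenvalues -/
lemma op_bound {A : Matrix n n ℝ} (hA : A.IsHermitian) {η : ℝ}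
    (h1 : (η • (1 : Matrix n n ℝ) - A).PosSemidef)
    (h2 : (A + η • (1 : Matrix n n ℝ)).PosSemidef) (u : n → ℝ) :
    (A *ᵥ u) ⬝ᵥ (A *ᵥ u) ≤ η ^ 2 * (u ⬝ᵥ u) := by
  have h2' : (A - (-η) • (1 : Matrix n n ℝ)).PosSemidef := by
    simpa [sub_neg_eq_add, neg_smul] using h2
  have heig : ∀ i, hA.eigenvalues i ^ 2 ≤ η ^ 2 := by
    intro i
    have hup := eig_le_of_psd hA h1 i
    have hlo := le_eig_of_psd hA h2' i
    nlinarith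
  have hq := quad_le (sq_eig_psd hA heig) u
  have hl : u ⬝ᵥ (A * A) *ᵥ u = (A *ᵥ u) ⬝ᵥ (A *ᵥ u) := by
    rw [← mulVec_mulVec, dot_shift hA]
  have hr : u ⬝ᵥ (η ^ 2 • (1 : Matrix n n ℝ)) *ᵥ u = η ^ 2 * (u ⬝ᵥ u) := by
    rw [smul_mulVec, one_mulVec, dotProduct_smul, smul_eq_mul]
  rw [hl, hr] at hq
  exact hq

lemma cs {A : Matrix n n ℝ} (hA : A.PosSemidef) (x y : n → ℝ) :
    (x ⬝ᵥ A *ᵥ y) ^ 2 ≤ (x ⬝ᵥ A *ᵥ x) * (y ⬝ᵥ A *ᵥ y) := by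
  have hsym : y ⬝ᵥ A *ᵥ x = x ⬝ᵥ A *ᵥ y := by
    rw [dot_shift hA.1, dotProduct_comm]
  have key : ∀ t : ℝ, 0 ≤ (y ⬝ᵥ A *ᵥ y) * (t * t) + (2 * (x ⬝ᵥ A *ᵥ y)) * t
      + (x ⬝ᵥ A *ᵥ x) := by
    intro t
    have h0 := quad_psd hA (x + t • y)
    simp only [mulVec_add, mulVec_smul, dotProduct_add, add_dotProduct, dotProduct_smul,
      smul_dotProduct, smul_eq_mul, smul_add] at h0
    rw [hsym] at h0
    ring_nf at h0 ⊢
    linarith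
  have hd := discrim_le_zero key
  rw [discrim] at hd
  nlinarith
  
lemma cs_bound {A : Matrix n n ℝ} (hA : A.PosSemidef) (x y : n → ℝ) {δ : ℝ} (hδ : 0 < δ) :
    |x ⬝ᵥ A *ᵥ y| ≤ (δ * (x ⬝ᵥ A *ᵥ x) + δ⁻¹ * (y ⬝ᵥ A *ᵥ y)) / 2 := by
  have h := cs hA x y
  have hx := quad_psd hA x
  have hy := quad_psd hA y
  have hδ' : 0 < δ⁻¹ := inv_pos.mpr hδ
  have hδδ : δ * δ⁻¹ = 1 := mul_inv_cancel₀ hδ.ne'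
  have hsq : (x ⬝ᵥ A *ᵥ y) ^ 2 ≤ ((δ * (x ⬝ᵥ A *ᵥ x) + δ⁻¹ * (y ⬝ᵥ A *ᵥ y)) / 2) ^ 2 := by
    nlinarith [sq_nonneg (δ * (x ⬝ᵥ A *ᵥ x) - δ⁻¹ * (y ⬝ᵥ A *ᵥ y))]
  have h2 : |x ⬝ᵥ A *ᵥ y| = Real.sqrt ((x ⬝ᵥ A *ᵥ y) ^ 2) := (Real.sqrt_sq_eq_abs _).symm
  rw [h2]
  have h3 : (0:ℝ) ≤ (δ * (x ⬝ᵥ A *ᵥ x) + δ⁻¹ * (y ⬝ᵥ A *ᵥ y)) / 2 := by positivity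
  calc Real.sqrt ((x ⬝ᵥ A *ᵥ y) ^ 2) ≤ Real.sqrt (((δ * (x ⬝ᵥ A *ᵥ x) + δ⁻¹ * (y ⬝ᵥ A *ᵥ y)) / 2) ^ 2) :=
        Real.sqrt_le_sqrt hsq
    _ = _ := by rw [Real.sqrt_sq h3]

lemma posdef_of_psd_sub {B : Matrix n n ℝ} (hB : B.IsHermitian) {c : ℝ} (hc : 0 < c)
    (h : (B - c • (1 : Matrix n n ℝ)).PosSemidef) : B.PosDef := by
  refine .of_dotProduct_mulVec_pos hB fun x hx => ?_
  have h1 := h.dotProduct_mulVec_nonneg x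
  simp only [star_trivial, sub_mulVec, dotProduct_sub, smul_mulVec, one_mulVec,
    dotProduct_smul, smul_eq_mul] at h1 ⊢
  have h2 : 0 < x ⬝ᵥ x := by
    rcases Function.ne_iff.mp hx with ⟨i, hi⟩
    have hi' : x i ≠ 0 := by simpa using hi
    refine Finset.sum_pos' (fun j _ => mul_self_nonneg _) ⟨i, Finset.mem_univ i, ?_⟩
    exact mul_self_pos.mpr hi'
  nlinarith



lemma herm_smul_one (c : ℝ) : ((c • (1 : Matrix n n ℝ))).IsHermitian := by
  rw [IsHermitian, conjTranspose_smul, conjTranspose_one]; simp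

lemma detUnit {B : Matrix n n ℝ} (hB : B.PosDef) : IsUnit B.det :=
  isUnit_iff_ne_zero.mpr hB.det_pos.ne'

/-- from `c•1 ⪯ B` deduce `c•B ⪯ B*B` -/
lemma sq_loewner_lower {B : Matrix n n ℝ} (hB : B.PosDef) {c : ℝ}
    (h : (B - c • (1 : Matrix n n ℝ)).PosSemidef) : (B * B - c • B).PosSemidef := by
  have hs := hB.posSemidef
  set T := posSemidefSqrt hs with hT
  have hTpsd := psqrt_psd hs
  have hTT : T * T = B := psqrt_mul_self hs
  have key := h.mul_mul_conjTranspose_same T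
  have hTH : Tᴴ = T := hTpsd.1
  have : T * (B - c • (1 : Matrix n n ℝ)) * Tᴴ = B * B - c • B := by
    rw [hTH, Matrix.mul_sub, Matrix.sub_mul]
    congr 1
    · rw [← hTT]; simp only [Matrix.mul_assoc]
    · rw [mul_smul_comm, mul_one, smul_mul_assoc, hTT]
  rwa [this] at key

/-- from `B ⪯ C•1` deduce `B*B ⪯ C•B` -/
lemma sq_loewner_upper {B : Matrix n n ℝ} (hB : B.PosDef) {C : ℝ}
    (h : (C • (1 : Matrix n n ℝ) - B).PosSemidef) : (C • B - B * B).PosSemidef := by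
  have hs := hB.posSemidef
  set T := posSemidefSqrt hs with hT
  have hTpsd := psqrt_psd hs
  have hTT : T * T = B := psqrt_mul_self hs
  have key := h.mul_mul_conjTranspose_same T
  have hTH : Tᴴ = T := hTpsd.1
  have : T * (C • (1 : Matrix n n ℝ) - B) * Tᴴ = C • B - B * B := by
    rw [hTH, Matrix.mul_sub, Matrix.sub_mul]
    congr 1
    · rw [mul_smul_comm, mul_one, smul_mul_assoc, hTT]
    · rw [← hTT]; simp only [Matrix.mul_assoc]
  rwa [this] at key

lemma inv_loewner_upper {B : Matrix n n ℝ} (hB : B.PosDef) {c : ℝ} (hc : 0 < c)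
    (h : (B - c • (1 : Matrix n n ℝ)).PosSemidef) :
    (c⁻¹ • (1 : Matrix n n ℝ) - B⁻¹).PosSemidef := by
  have hBi := hB.inv
  refine .of_dotProduct_mulVec_nonneg ((herm_smul_one c⁻¹).sub hBi.1) fun x => ?_
  set y := B⁻¹ *ᵥ x with hy0
  have hy : B *ᵥ y = x := by
    rw [hy0, mulVec_mulVec, Matrix.mul_nonsing_inv _ (detUnit hB), one_mulVec]
  have h1 : x ⬝ᵥ B⁻¹ *ᵥ x = y ⬝ᵥ B *ᵥ y := by
    rw [dot_shift hB.1 y y, hy, dotProduct_comm]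
  have h2 : y ⬝ᵥ (B * B) *ᵥ y = x ⬝ᵥ x := by
    rw [← mulVec_mulVec, dot_shift hB.1, hy]
  have h3 := quad_le (sq_loewner_lower hB h) y
  rw [h2] at h3
  have h4 : y ⬝ᵥ (c • B) *ᵥ y = c * (y ⬝ᵥ B *ᵥ y) := by
    rw [smul_mulVec, dotProduct_smul, smul_eq_mul]
  rw [h4] at h3
  simp only [star_trivial, sub_mulVec, dotProduct_sub, smul_mulVec, one_mulVec,
    dotProduct_smul, smul_eq_mul]
  rw [h1]
  have h5 : y ⬝ᵥ B *ᵥ y ≤ c⁻¹ * (x ⬝ᵥ x) := by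
    rw [le_inv_mul_iff₀ hc]
    linarith
  linarith

lemma inv_loewner_lower {B : Matrix n n ℝ} (hB : B.PosDef) {C : ℝ} (hC : 0 < C)
    (h : (C • (1 : Matrix n n ℝ) - B).PosSemidef) :
    (B⁻¹ - C⁻¹ • (1 : Matrix n n ℝ)).PosSemidef := by
  have hBi := hB.inv
  refine .of_dotProduct_mulVec_nonneg (hBi.1.sub (herm_smul_one C⁻¹)) fun x => ?_
  set y := B⁻¹ *ᵥ x with hy0
  have hy : B *ᵥ y = x := by
    rw [hy0, mulVec_mulVec, Matrix.mul_nonsing_inv _ (detUnit hB), one_mulVec]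
  have h1 : x ⬝ᵥ B⁻¹ *ᵥ x = y ⬝ᵥ B *ᵥ y := by
    rw [dot_shift hB.1 y y, hy, dotProduct_comm]
  have h2 : y ⬝ᵥ (B * B) *ᵥ y = x ⬝ᵥ x := by
    rw [← mulVec_mulVec, dot_shift hB.1, hy]
  have h3 := quad_le (sq_loewner_upper hB h) y
  rw [h2] at h3
  have h4 : y ⬝ᵥ (C • B) *ᵥ y = C * (y ⬝ᵥ B *ᵥ y) := by
    rw [smul_mulVec, dotProduct_smul, smul_eq_mul]
  rw [h4] at h3
  simp only [star_trivial, sub_mulVec, dotProduct_sub, smul_mulVec, one_mulVec,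
    dotProduct_smul, smul_eq_mul]
  rw [h1]
  have : C⁻¹ * (x ⬝ᵥ x) ≤ y ⬝ᵥ B *ᵥ y := by
    rw [inv_mul_le_iff₀ hC]
    linarith
  linarith



lemma psd_one : (1 : Matrix n n ℝ).PosSemidef := Matrix.PosSemidef.one

lemma sqrt_det_unit {Sg : Matrix n n ℝ} (hSg : Sg.PosDef) :
    IsUnit (posSemidefSqrt hSg.posSemidef).det := by
  have h : (posSemidefSqrt hSg.posSemidef).det * (posSemidefSqrt hSg.posSemidef).det = Sg.det := by
    rw [← Matrix.det_mul, psqrt_mul_self hSg.posSemidef]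
  have h2 := hSg.det_pos
  refine isUnit_iff_ne_zero.mpr fun h0 => ?_
  rw [h0, mul_zero] at h
  exact h2.ne' h.symm

lemma sqrt_inv_herm {Sg : Matrix n n ℝ} (hSg : Sg.PosDef) :
    ((posSemidefSqrt hSg.posSemidef)⁻¹).IsHermitian := by
  rw [IsHermitian, conjTranspose_nonsing_inv, (psqrt_psd hSg.posSemidef).1]

/-- conjugating by `sqrt⁻¹` turns the interval bounds on `Sh` into bounds on `B`. -/
lemma conj_psd_to_B {Sg Sh : Matrix n n ℝ} (hSg : Sg.PosDef) {c : ℝ}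
    (h : (Sh - c • Sg).PosSemidef) :
    ((posSemidefSqrt hSg.posSemidef)⁻¹ * Sh * (posSemidefSqrt hSg.posSemidef)⁻¹
      - c • (1 : Matrix n n ℝ)).PosSemidef := by
  set S := posSemidefSqrt hSg.posSemidef with hS
  have key := h.mul_mul_conjTranspose_same S⁻¹
  have hH : (S⁻¹)ᴴ = S⁻¹ := sqrt_inv_herm hSg
  have hSiS : S⁻¹ * S = 1 := nonsing_inv_mul _ (sqrt_det_unit hSg)
  have hSSi : S * S⁻¹ = 1 := mul_nonsing_inv _ (sqrt_det_unit hSg)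
  have hcomp : S⁻¹ * (Sh - c • Sg) * (S⁻¹)ᴴ = S⁻¹ * Sh * S⁻¹ - c • (1 : Matrix n n ℝ) := by
    rw [hH, Matrix.mul_sub, Matrix.sub_mul]
    congr 1
    rw [mul_smul_comm, smul_mul_assoc]
    congr 1
    rw [← psqrt_mul_self hSg.posSemidef, ← hS, show S⁻¹ * (S * S) * S⁻¹ = (S⁻¹ * S) * (S * S⁻¹) by
      simp only [Matrix.mul_assoc], hSiS, hSSi, one_mul]
  rwa [hcomp] at key

lemma conj_psd_to_B' {Sg Sh : Matrix n n ℝ} (hSg : Sg.PosDef) {c : ℝ}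
    (h : (c • Sg - Sh).PosSemidef) :
    (c • (1 : Matrix n n ℝ)
      - (posSemidefSqrt hSg.posSemidef)⁻¹ * Sh * (posSemidefSqrt hSg.posSemidef)⁻¹).PosSemidef := by
  set S := posSemidefSqrt hSg.posSemidef with hS
  have key := h.mul_mul_conjTranspose_same S⁻¹
  have hH : (S⁻¹)ᴴ = S⁻¹ := sqrt_inv_herm hSg
  have hSiS : S⁻¹ * S = 1 := nonsing_inv_mul _ (sqrt_det_unit hSg)
  have hSSi : S * S⁻¹ = 1 := mul_nonsing_inv _ (sqrt_det_unit hSg)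
  have hcomp : S⁻¹ * (c • Sg - Sh) * (S⁻¹)ᴴ
      = c • (1 : Matrix n n ℝ) - S⁻¹ * Sh * S⁻¹ := by
    rw [hH, Matrix.mul_sub, Matrix.sub_mul]
    congr 1
    rw [mul_smul_comm, smul_mul_assoc]
    congr 1
    rw [← psqrt_mul_self hSg.posSemidef, ← hS, show S⁻¹ * (S * S) * S⁻¹ = (S⁻¹ * S) * (S * S⁻¹) by
      simp only [Matrix.mul_assoc], hSiS, hSSi, one_mul]
  rwa [hcomp] at key

/-- Main perturbation bound : `‖(Sh⁻¹ - Sg⁻¹) m‖² ≤ 64 ε²/λ² ‖m‖²`. -/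
lemma inv_diff_bound {Sg Sh : Matrix n n ℝ} (hSg : Sg.PosDef)
    (hSh : Sh.IsHermitian) {ε lam : ℝ} (hε0 : 0 ≤ ε) (hε : ε ≤ 1/2) (hlam : 0 < lam)
    (hlo : (Sh - (1-ε)^2 • Sg).PosSemidef) (hhi : ((1+ε)^2 • Sg - Sh).PosSemidef)
    (hlam2 : (Sg - lam • (1 : Matrix n n ℝ)).PosSemidef) (m : n → ℝ) :
    ((Sh⁻¹ - Sg⁻¹) *ᵥ m) ⬝ᵥ ((Sh⁻¹ - Sg⁻¹) *ᵥ m) ≤ 64 * ε^2 / lam^2 * (m ⬝ᵥ m) := by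
  set S := posSemidefSqrt hSg.posSemidef with hS
  have hdetS := sqrt_det_unit hSg
  have hH : (S⁻¹)ᴴ = S⁻¹ := sqrt_inv_herm hSg
  have hSiS : S⁻¹ * S = 1 := nonsing_inv_mul _ hdetS
  have hSSi : S * S⁻¹ = 1 := mul_nonsing_inv _ hdetS
  have hSS : S * S = Sg := psqrt_mul_self hSg.posSemidef
  set B := S⁻¹ * Sh * S⁻¹ with hBdef
  have hBh : B.IsHermitian := by
    rw [IsHermitian, hBdef, conjTranspose_mul, conjTranspose_mul, hH, hSh]
    simp only [Matrix.mul_assoc]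
  have hc0 : (0:ℝ) < (1-ε)^2 := by nlinarith
  have hC0 : (0:ℝ) < (1+ε)^2 := by nlinarith
  have hBlo : (B - (1-ε)^2 • (1 : Matrix n n ℝ)).PosSemidef := conj_psd_to_B hSg hlo
  have hBhi : ((1+ε)^2 • (1 : Matrix n n ℝ) - B).PosSemidef := conj_psd_to_B' hSg hhi
  have hBpd : B.PosDef := posdef_of_psd_sub hBh hc0 hBlo
  have hBiu : (((1-ε)^2)⁻¹ • (1 : Matrix n n ℝ) - B⁻¹).PosSemidef :=
    inv_loewner_upper hBpd hc0 hBlo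
  have hBil : (B⁻¹ - ((1+ε)^2)⁻¹ • (1 : Matrix n n ℝ)).PosSemidef :=
    inv_loewner_lower hBpd hC0 hBhi
  set E : Matrix n n ℝ := B⁻¹ - 1 with hEdef
  have hEh : E.IsHermitian := hBpd.inv.1.sub isHermitian_one
  -- scalar inequalities
  have e1 : ((1-ε)^2)⁻¹ ≤ 1 + 8*ε := by
    have key : 1 ≤ (1+8*ε) * (1-ε)^2 := by
      nlinarith [mul_nonneg hε0 (sq_nonneg (1-2*ε)), mul_nonneg hε0 (by linarith : (0:ℝ) ≤ 1/2 - ε)]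
    have h2 := inv_mul_cancel₀ hc0.ne'
    nlinarith [mul_le_mul_of_nonneg_left key (inv_nonneg.mpr hc0.le)]
  have e2 : 1 - 8*ε ≤ ((1+ε)^2)⁻¹ := by
    have key : (1-8*ε) * (1+ε)^2 ≤ 1 := by
      nlinarith [mul_nonneg hε0 hε0, mul_nonneg (mul_nonneg hε0 hε0) hε0]
    have h2 := inv_mul_cancel₀ hC0.ne'
    nlinarith [mul_le_mul_of_nonneg_left key (inv_nonneg.mpr hC0.le)]
  -- E is bounded in operator norm by 8ε
  have hup : ((8*ε) • (1 : Matrix n n ℝ) - E).PosSemidef := by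
    have hs : (0:ℝ) ≤ 8*ε + 1 - ((1-ε)^2)⁻¹ := by linarith
    have heq : (8*ε) • (1 : Matrix n n ℝ) - E
        = (((1-ε)^2)⁻¹ • (1 : Matrix n n ℝ) - B⁻¹)
          + (8*ε + 1 - ((1-ε)^2)⁻¹) • (1 : Matrix n n ℝ) := by
      rw [hEdef]; module
    rw [heq]
    exact hBiu.add (psd_smul psd_one hs)
  have hlo' : (E + (8*ε) • (1 : Matrix n n ℝ)).PosSemidef := by
    have hs : (0:ℝ) ≤ ((1+ε)^2)⁻¹ - 1 + 8*ε := by linarith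
    have heq : E + (8*ε) • (1 : Matrix n n ℝ)
        = (B⁻¹ - ((1+ε)^2)⁻¹ • (1 : Matrix n n ℝ))
          + (((1+ε)^2)⁻¹ - 1 + 8*ε) • (1 : Matrix n n ℝ) := by
      rw [hEdef]; module
    rw [heq]
    exact hBil.add (psd_smul psd_one hs)
  have hE := op_bound hEh hup hlo'
  -- identification of Sh⁻¹ - Sg⁻¹
  have hBinv : B⁻¹ = S * Sh⁻¹ * S := by
    rw [hBdef, Matrix.mul_inv_rev, Matrix.mul_inv_rev, nonsing_inv_nonsing_inv _ hdetS]
    simp only [Matrix.mul_assoc]; rfl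
  have hSgi : Sg⁻¹ = S⁻¹ * S⁻¹ := by rw [← hSS, Matrix.mul_inv_rev]
  have hdiff : Sh⁻¹ - Sg⁻¹ = S⁻¹ * E * S⁻¹ := by
    rw [hEdef, Matrix.mul_sub, Matrix.sub_mul, hBinv, mul_one, ← hSgi]
    congr 1
    symm
    calc S⁻¹ * (S * Sh⁻¹ * S) * S⁻¹ = (S⁻¹ * S) * Sh⁻¹ * (S * S⁻¹) := by
          simp only [Matrix.mul_assoc]
      _ = Sh⁻¹ := by rw [hSiS, hSSi, one_mul, Matrix.mul_one]
  -- Sg⁻¹ ⪯ lam⁻¹ • 1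
  have hSgiu : (lam⁻¹ • (1 : Matrix n n ℝ) - Sg⁻¹).PosSemidef :=
    inv_loewner_upper hSg hlam hlam2
  -- ‖S⁻¹ v‖² = v ⬝ Sg⁻¹ v ≤ lam⁻¹ ‖v‖²
  have hSnorm : ∀ v : n → ℝ, (S⁻¹ *ᵥ v) ⬝ᵥ (S⁻¹ *ᵥ v) ≤ lam⁻¹ * (v ⬝ᵥ v) := by
    intro v
    have h1 : (S⁻¹ *ᵥ v) ⬝ᵥ (S⁻¹ *ᵥ v) = v ⬝ᵥ Sg⁻¹ *ᵥ v := by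
      rw [hSgi, ← mulVec_mulVec, dot_shift hH v (S⁻¹ *ᵥ v)]
    have h2 := quad_le hSgiu v
    have h3 : v ⬝ᵥ (lam⁻¹ • (1 : Matrix n n ℝ)) *ᵥ v = lam⁻¹ * (v ⬝ᵥ v) := by
      rw [smul_mulVec, one_mulVec, dotProduct_smul, smul_eq_mul]
    rw [h1]; rw [h3] at h2; exact h2
  -- assemble
  set u := S⁻¹ *ᵥ m with hu
  set w := E *ᵥ u with hw
  have step0 : (Sh⁻¹ - Sg⁻¹) *ᵥ m = S⁻¹ *ᵥ w := by
    rw [hdiff, hw, hu, ← mulVec_mulVec, ← mulVec_mulVec]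
  have step1 : ((Sh⁻¹ - Sg⁻¹) *ᵥ m) ⬝ᵥ ((Sh⁻¹ - Sg⁻¹) *ᵥ m) ≤ lam⁻¹ * (w ⬝ᵥ w) := by
    rw [step0]; exact hSnorm w
  have step2 : w ⬝ᵥ w ≤ (8*ε)^2 * (u ⬝ᵥ u) := hE u
  have step3 : u ⬝ᵥ u ≤ lam⁻¹ * (m ⬝ᵥ m) := hSnorm m
  have hlaminv : (0:ℝ) ≤ lam⁻¹ := inv_nonneg.mpr hlam.le
  have h8 : (0:ℝ) ≤ (8*ε)^2 := sq_nonneg _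
  calc ((Sh⁻¹ - Sg⁻¹) *ᵥ m) ⬝ᵥ ((Sh⁻¹ - Sg⁻¹) *ᵥ m) ≤ lam⁻¹ * (w ⬝ᵥ w) := step1
    _ ≤ lam⁻¹ * ((8*ε)^2 * (u ⬝ᵥ u)) := by
        exact mul_le_mul_of_nonneg_left step2 hlaminv
    _ ≤ lam⁻¹ * ((8*ε)^2 * (lam⁻¹ * (m ⬝ᵥ m))) := by
        refine mul_le_mul_of_nonneg_left (mul_le_mul_of_nonneg_left step3 h8) hlaminv
    _ = 64 * ε^2 / lam^2 * (m ⬝ᵥ m) := by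
        field_simp
        ring




lemma specMin_le {d : ℕ} {A : Matrix (Fin d) (Fin d) ℝ} (hA : A.IsHermitian) (i : Fin d) :
    specMin A hA ≤ hA.eigenvalues i :=
  ciInf_le (Set.Finite.bddBelow (Set.finite_range _)) i

lemma le_specMax {d : ℕ} {A : Matrix (Fin d) (Fin d) ℝ} (hA : A.IsHermitian) (i : Fin d) :
    hA.eigenvalues i ≤ specMax A hA :=
  le_ciSup (Set.Finite.bddAbove (Set.finite_range _)) i

lemma specMin_pos {d : ℕ} [NeZero d] {A : Matrix (Fin d) (Fin d) ℝ} (hA : A.PosDef) :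
    0 < specMin A hA.1 := by
  obtain ⟨i, hi⟩ := Finite.exists_min hA.1.eigenvalues
  have h1 : specMin A hA.1 = hA.1.eigenvalues i := le_antisymm (specMin_le hA.1 i)
    (le_ciInf hi)
  rw [h1]
  exact hA.eigenvalues_pos i

/-- From the sqrt-eigenvalue approximation hypotheses, derive the two-sided Loewner bounds. -/
lemma spec_to_psd {d : ℕ} {Sg Sh : Matrix (Fin d) (Fin d) ℝ} (hSg : Sg.PosDef)
    {ε : ℝ} (hε0 : 0 ≤ ε) (hε : ε ≤ 1/2)
    (hA : ((posSemidefSqrt hSg.posSemidef)⁻¹ * Sh * (posSemidefSqrt hSg.posSemidef)⁻¹).IsHermitian)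
    (hmin : 1 - ε ≤ Real.sqrt (specMin ((posSemidefSqrt hSg.posSemidef)⁻¹ * Sh *
      (posSemidefSqrt hSg.posSemidef)⁻¹) hA))
    (hmax : Real.sqrt (specMax ((posSemidefSqrt hSg.posSemidef)⁻¹ * Sh *
      (posSemidefSqrt hSg.posSemidef)⁻¹) hA) ≤ 1 + ε) :
    ((posSemidefSqrt hSg.posSemidef)⁻¹ * Sh * (posSemidefSqrt hSg.posSemidef)⁻¹
        - (1-ε)^2 • (1 : Matrix (Fin d) (Fin d) ℝ)).PosSemidef ∧
      ((1+ε)^2 • (1 : Matrix (Fin d) (Fin d) ℝ)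
        - (posSemidefSqrt hSg.posSemidef)⁻¹ * Sh * (posSemidefSqrt hSg.posSemidef)⁻¹).PosSemidef := by
  set B := (posSemidefSqrt hSg.posSemidef)⁻¹ * Sh * (posSemidefSqrt hSg.posSemidef)⁻¹ with hB
  have h1e : (0:ℝ) < 1 - ε := by linarith
  have hsqpos : 0 < Real.sqrt (specMin B hA) := lt_of_lt_of_le h1e hmin
  have hminpos : 0 < specMin B hA := Real.sqrt_pos.mp hsqpos
  have hlo : ∀ i, (1-ε)^2 ≤ hA.eigenvalues i := fun i => by
    have h2 : (1-ε)^2 ≤ specMin B hA := by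
      have := Real.sq_sqrt hminpos.le
      nlinarith [hmin, Real.sqrt_nonneg (specMin B hA)]
    exact le_trans h2 (specMin_le hA i)
  have hhi : ∀ i, hA.eigenvalues i ≤ (1+ε)^2 := fun i => by
    have h2 : specMax B hA ≤ (1+ε)^2 := by
      by_cases hm : 0 ≤ specMax B hA
      · have := Real.sq_sqrt hm
        nlinarith [hmax, Real.sqrt_nonneg (specMax B hA)]
      · nlinarith [not_le.mp hm]
    exact le_trans (le_specMax hA i) h2
  exact ⟨psd_of_le_eig hA hlo, psd_of_eig_le hA hhi⟩



/-- embed a `d₁ × d₁` matrix as the top-left block -/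
def emb (d₂ : ℕ) (M : Matrix (Fin d₁) (Fin d₁) ℝ) : Matrix (Fin (d₁+d₂)) (Fin (d₁+d₂)) ℝ :=
  Matrix.of fun i j => if h : (i : ℕ) < d₁ ∧ (j : ℕ) < d₁ then M ⟨i, h.1⟩ ⟨j, h.2⟩ else 0

/-- restrict a vector to its first `d₁` coordinates -/
def res (d₂ : ℕ) (m : Fin (d₁+d₂) → ℝ) : Fin d₁ → ℝ := fun k => m (Fin.castAdd d₂ k)

/-- extend a vector by zeros -/
def ext (d₂ : ℕ) (v : Fin d₁ → ℝ) : Fin (d₁+d₂) → ℝ :=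
  fun i => if h : (i : ℕ) < d₁ then v ⟨i, h⟩ else 0

lemma emb_sub (M N : Matrix (Fin d₁) (Fin d₁) ℝ) :
    emb d₂ (M - N) = emb d₂ M - emb d₂ N := by
  ext i j
  simp only [emb, Matrix.of_apply, Matrix.sub_apply]
  by_cases h : (i : ℕ) < d₁ ∧ (j : ℕ) < d₁
  · rw [dif_pos h, dif_pos h, dif_pos h]
  · rw [dif_neg h, dif_neg h, dif_neg h]; ring

lemma emb_herm {M : Matrix (Fin d₁) (Fin d₁) ℝ} (hM : M.IsHermitian) :
    (emb d₂ M).IsHermitian := by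
  ext i j
  simp only [conjTranspose_apply, emb, Matrix.of_apply, star_trivial]
  by_cases h : (j : ℕ) < d₁ ∧ (i : ℕ) < d₁
  · rw [dif_pos h, dif_pos ⟨h.2, h.1⟩]
    have := congrFun (congrFun hM ⟨j, h.1⟩) ⟨i, h.2⟩
    simpa [conjTranspose_apply] using this.symm
  · rw [dif_neg h, dif_neg (fun hc => h ⟨hc.2, hc.1⟩)]

lemma emb_mulVec (M : Matrix (Fin d₁) (Fin d₁) ℝ) (m : Fin (d₁+d₂) → ℝ) :
    (emb d₂ M) *ᵥ m = ext d₂ (M *ᵥ res d₂ m) := by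
  funext i
  simp only [Matrix.mulVec, dotProduct, emb, Matrix.of_apply, ext]
  by_cases h : (i : ℕ) < d₁
  · rw [dif_pos h, Fin.sum_univ_add]
    have hz : ∀ k : Fin d₂,
        (if hc : (i : ℕ) < d₁ ∧ ((Fin.natAdd d₁ k : Fin (d₁+d₂)) : ℕ) < d₁
          then M ⟨i, hc.1⟩ ⟨(Fin.natAdd d₁ k : Fin (d₁+d₂)), hc.2⟩ else 0)
          * m (Fin.natAdd d₁ k) = 0 := by
      intro k
      rw [dif_neg, zero_mul]
      rintro ⟨-, hk⟩
      simp only [Fin.coe_natAdd] at hk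
      omega
    rw [Finset.sum_congr rfl (fun k _ => hz k), Finset.sum_const, smul_zero, add_zero]
    simp only [Matrix.mulVec, dotProduct, res]
    apply Finset.sum_congr rfl
    intro k _
    have hk : ((Fin.castAdd d₂ k : Fin (d₁+d₂)) : ℕ) < d₁ := by
      simp only [Fin.coe_castAdd]; exact k.isLt
    rw [dif_pos ⟨h, hk⟩]
    have hiv : (⟨((Fin.castAdd d₂ k : Fin (d₁+d₂)) : ℕ), hk⟩ : Fin d₁) = k := Fin.ext (by simp)
    rw [hiv]
  · rw [dif_neg h]
    apply Finset.sum_eq_zero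
    intro j _
    rw [dif_neg (fun hc => h hc.1), zero_mul]

lemma ext_dot (v w : Fin d₁ → ℝ) : (ext d₂ v) ⬝ᵥ (ext d₂ w) = v ⬝ᵥ w := by
  simp only [dotProduct, ext]
  rw [Fin.sum_univ_add]
  have hz : ∀ k : Fin d₂, (if h : ((Fin.natAdd d₁ k : Fin (d₁+d₂)) : ℕ) < d₁
      then v ⟨_, h⟩ else 0) * (if h : ((Fin.natAdd d₁ k : Fin (d₁+d₂)) : ℕ) < d₁
      then w ⟨_, h⟩ else 0) = 0 := by
    intro k
    rw [dif_neg, zero_mul]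
    simp only [Fin.coe_natAdd]
    omega
  rw [Finset.sum_congr rfl (fun k _ => hz k), Finset.sum_const, smul_zero, add_zero]
  apply Finset.sum_congr rfl
  intro k _
  have hk : ((Fin.castAdd d₂ k : Fin (d₁+d₂)) : ℕ) < d₁ := by
    simp only [Fin.coe_castAdd]; exact k.isLt
  rw [dif_pos hk, dif_pos hk]
  have hiv : (⟨((Fin.castAdd d₂ k : Fin (d₁+d₂)) : ℕ), hk⟩ : Fin d₁) = k := Fin.ext (by simp)
  rw [hiv]

lemma res_dot_le (m : Fin (d₁+d₂) → ℝ) : (res d₂ m) ⬝ᵥ (res d₂ m) ≤ m ⬝ᵥ m := by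
  simp only [dotProduct, res]
  rw [Fin.sum_univ_add]
  have h2 : (0:ℝ) ≤ ∑ k : Fin d₂, m (Fin.natAdd d₁ k) * m (Fin.natAdd d₁ k) :=
    Finset.sum_nonneg fun k _ => mul_self_nonneg _
  linarith

lemma block_psd {Sig : Matrix (Fin (d₁+d₂)) (Fin (d₁+d₂)) ℝ}
    {Sig1 : Matrix (Fin d₁) (Fin d₁) ℝ} (hSig1 : Sig1.IsHermitian)
    (hrel : ∀ i j, Sig1 i j = Sig (Fin.castAdd d₂ i) (Fin.castAdd d₂ j))
    {lam : ℝ} (h : (Sig - lam • (1 : Matrix (Fin (d₁+d₂)) (Fin (d₁+d₂)) ℝ)).PosSemidef) :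
    (Sig1 - lam • (1 : Matrix (Fin d₁) (Fin d₁) ℝ)).PosSemidef := by
  have hone : ((lam • (1 : Matrix (Fin d₁) (Fin d₁) ℝ))).IsHermitian := by
    rw [Matrix.IsHermitian, conjTranspose_smul, conjTranspose_one]; simp
  refine .of_dotProduct_mulVec_nonneg (hSig1.sub hone) fun v => ?_
  have key := h.dotProduct_mulVec_nonneg (ext d₂ v)
  -- quadratic form of Sig at ext v equals that of Sig1 at v
  have hq : (ext d₂ v) ⬝ᵥ Sig *ᵥ (ext d₂ v) = v ⬝ᵥ Sig1 *ᵥ v := by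
    simp only [dotProduct, Matrix.mulVec, ext]
    rw [Fin.sum_univ_add]
    have hz : ∀ k : Fin d₂, (if h : ((Fin.natAdd d₁ k : Fin (d₁+d₂)) : ℕ) < d₁
        then v ⟨_, h⟩ else 0) * (∑ j, Sig (Fin.natAdd d₁ k) j *
          (if h : (j : ℕ) < d₁ then v ⟨j, h⟩ else 0)) = 0 := by
      intro k
      rw [dif_neg, zero_mul]
      simp only [Fin.coe_natAdd]
      omega
    rw [Finset.sum_congr rfl (fun k _ => hz k), Finset.sum_const, smul_zero, add_zero]
    apply Finset.sum_congr rfl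
    intro k _
    have hk : ((Fin.castAdd d₂ k : Fin (d₁+d₂)) : ℕ) < d₁ := by
      simp only [Fin.coe_castAdd]; exact k.isLt
    rw [dif_pos hk]
    have hiv : (⟨((Fin.castAdd d₂ k : Fin (d₁+d₂)) : ℕ), hk⟩ : Fin d₁) = k :=
      Fin.ext (by simp)
    rw [hiv]
    congr 1
    rw [Fin.sum_univ_add]
    have hz2 : ∀ j : Fin d₂, Sig (Fin.castAdd d₂ k) (Fin.natAdd d₁ j) *
        (if h : ((Fin.natAdd d₁ j : Fin (d₁+d₂)) : ℕ) < d₁ then v ⟨_, h⟩ else 0) = 0 := by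
      intro j
      rw [dif_neg, mul_zero]
      simp only [Fin.coe_natAdd]
      omega
    rw [Finset.sum_congr rfl (fun j _ => hz2 j), Finset.sum_const, smul_zero, add_zero]
    apply Finset.sum_congr rfl
    intro j _
    have hj : ((Fin.castAdd d₂ j : Fin (d₁+d₂)) : ℕ) < d₁ := by
      simp only [Fin.coe_castAdd]; exact j.isLt
    rw [dif_pos hj]
    have hjv : (⟨((Fin.castAdd d₂ j : Fin (d₁+d₂)) : ℕ), hj⟩ : Fin d₁) = j :=
      Fin.ext (by simp)
    rw [hjv, hrel k j]
  have hn : (ext d₂ v) ⬝ᵥ (ext d₂ v) = v ⬝ᵥ v := ext_dot v v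
  simp only [star_trivial, sub_mulVec, dotProduct_sub, smul_mulVec, one_mulVec,
    dotProduct_smul, smul_eq_mul] at key ⊢
  rw [hq, hn] at key
  exact key

/-- conjugating `B`-interval bounds back by `sqrt` -/
lemma conj_back {Sg Sh : Matrix n n ℝ} (hSg : Sg.PosDef) {c : ℝ}
    (h : ((posSemidefSqrt hSg.posSemidef)⁻¹ * Sh * (posSemidefSqrt hSg.posSemidef)⁻¹
      - c • (1 : Matrix n n ℝ)).PosSemidef) : (Sh - c • Sg).PosSemidef := by
  set S := posSemidefSqrt hSg.posSemidef with hS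
  have hH : Sᴴ = S := (psqrt_psd hSg.posSemidef).1
  have hSiS : S⁻¹ * S = 1 := nonsing_inv_mul _ (sqrt_det_unit hSg)
  have hSSi : S * S⁻¹ = 1 := mul_nonsing_inv _ (sqrt_det_unit hSg)
  have key := h.mul_mul_conjTranspose_same S
  have hcomp : S * (S⁻¹ * Sh * S⁻¹ - c • (1 : Matrix n n ℝ)) * Sᴴ = Sh - c • Sg := by
    rw [hH, Matrix.mul_sub, Matrix.sub_mul]
    congr 1
    · calc S * (S⁻¹ * Sh * S⁻¹) * S = (S * S⁻¹) * Sh * (S⁻¹ * S) := by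
            simp only [Matrix.mul_assoc]
        _ = Sh := by rw [hSiS, hSSi, one_mul, Matrix.mul_one]
    · rw [mul_smul_comm, smul_mul_assoc, mul_one, psqrt_mul_self hSg.posSemidef]
  rwa [hcomp] at key

lemma conj_back' {Sg Sh : Matrix n n ℝ} (hSg : Sg.PosDef) {c : ℝ}
    (h : (c • (1 : Matrix n n ℝ)
      - (posSemidefSqrt hSg.posSemidef)⁻¹ * Sh * (posSemidefSqrt hSg.posSemidef)⁻¹).PosSemidef) :
    (c • Sg - Sh).PosSemidef := by
  set S := posSemidefSqrt hSg.posSemidef with hS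
  have hH : Sᴴ = S := (psqrt_psd hSg.posSemidef).1
  have hSiS : S⁻¹ * S = 1 := nonsing_inv_mul _ (sqrt_det_unit hSg)
  have hSSi : S * S⁻¹ = 1 := mul_nonsing_inv _ (sqrt_det_unit hSg)
  have key := h.mul_mul_conjTranspose_same S
  have hcomp : S * (c • (1 : Matrix n n ℝ) - S⁻¹ * Sh * S⁻¹) * Sᴴ = c • Sg - Sh := by
    rw [hH, Matrix.mul_sub, Matrix.sub_mul]
    congr 1
    · rw [mul_smul_comm, smul_mul_assoc, mul_one, psqrt_mul_self hSg.posSemidef]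
    · calc S * (S⁻¹ * Sh * S⁻¹) * S = (S * S⁻¹) * Sh * (S⁻¹ * S) := by
            simp only [Matrix.mul_assoc]
        _ = Sh := by rw [hSiS, hSSi, one_mul, Matrix.mul_one]
  rwa [hcomp] at key

lemma quad_smul (c : ℝ) (A : Matrix n n ℝ) (x : n → ℝ) :
    x ⬝ᵥ (c • A) *ᵥ x = c * (x ⬝ᵥ A *ᵥ x) := by
  rw [smul_mulVec, dotProduct_smul, smul_eq_mul]

lemma scalar_final {ε Q aS ΔS aΔ LK : ℝ}
    (hε0 : 0 ≤ ε) (hε : ε ≤ 1/2) (hQ0 : 0 ≤ Q) (hLK0 : 0 ≤ LK)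
    (haSu : aS ≤ (1+ε)^2 * Q) (haSl : (1-ε)^2 * Q ≤ aS)
    (hΔS0 : 0 ≤ ΔS) (hΔS : ΔS ≤ 576 * LK)
    (habs : |aΔ| ≤ ((1/64) * aS + (1/64 : ℝ)⁻¹ * ΔS)/2)
    (hQ4 : ε > 1/32 → Q ≤ 4096 * LK) :
    |(aS + 2*aΔ + ΔS) - Q| ≤ 1/8 * Q + 50000 * LK := by
  have habs' := abs_le.mp habs
  rw [abs_le]
  by_cases hcase : ε ≤ 1/32
  · have k1 : 0 ≤ (1/32 - ε) * Q := mul_nonneg (by linarith) hQ0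
    have k2 : 0 ≤ (1/32 - ε) * (ε * Q) := mul_nonneg (by linarith) (mul_nonneg hε0 hQ0)
    constructor <;> nlinarith [habs'.1, habs'.2, mul_nonneg hε0 hQ0]
  · have hQb := hQ4 (not_le.mp hcase)
    have k1 : 0 ≤ (1/2 - ε) * Q := mul_nonneg (by linarith) hQ0
    have k2 : 0 ≤ (1/2 - ε) * (ε * Q) := mul_nonneg (by linarith) (mul_nonneg hε0 hQ0)
    constructor <;> nlinarith [habs'.1, habs'.2, mul_nonneg hε0 hQ0]


end ResAux

open ResAux in
/-- Bias bound for the plug-in residual estimator: if `Σ̂` and `Σ̂₁` are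
multiplicative spectral approximations of `Σ` and `Σ₁` with accuracy `ε ≤ 1/2`,
then `|⟨R̂ Σ̂ R̂ μ, μ⟩ - ⟨R Σ R μ, μ⟩| ≤ (1/8)⟨R Σ R μ, μ⟩ +
C (λ_max(Σ)/λ_min²(Σ)) ‖μ‖₂² ε²`, where `μ = E[xy]`, `R = D† - Σ⁻¹`,
`R̂ = D̂† - Σ̂⁻¹`, and `D` (resp. `D̂`) is the block matrix with top-left block `Σ₁`
(resp. `Σ̂₁`) and zeros elsewhere (the pseudoinverse of such a block matrix is the
block matrix of the inverse of the top-left block). -/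
theorem plugin_residual_bias_bound :
    ∃ C : ℝ, 0 < C ∧
      ∀ (Ω : Type) [MeasurableSpace Ω] (μ : Measure Ω) [IsProbabilityMeasure μ]
        (d₁ d₂ : ℕ) (hd₁ : 0 < d₁) (hd₂ : 0 < d₂)
        (x : Ω → Fin (d₁ + d₂) → ℝ) (y : Ω → ℝ),
        (∀ i j, Integrable (fun ω => x ω i * x ω j) μ) →
        (∀ i, Integrable (fun ω => x ω i * y ω) μ) →
        -- population second moment matrices
        ∀ (Sig : Matrix (Fin (d₁ + d₂)) (Fin (d₁ + d₂)) ℝ),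
        (∀ i j, Sig i j = ∫ ω, x ω i * x ω j ∂μ) →
        ∀ (Sig1 : Matrix (Fin d₁) (Fin d₁) ℝ),
        (∀ i j, Sig1 i j = Sig (Fin.castAdd d₂ i) (Fin.castAdd d₂ j)) →
        ∀ (hSig : Sig.PosDef) (hSig1 : Sig1.PosDef),
        -- estimated second moment matrices, spectrally ε-accurate
        ∀ (Shat : Matrix (Fin (d₁ + d₂)) (Fin (d₁ + d₂)) ℝ)
          (Shat1 : Matrix (Fin d₁) (Fin d₁) ℝ),
        Shat.IsHermitian → Shat1.IsHermitian →
        ∀ (ε : ℝ), 0 ≤ ε → ε ≤ 1 / 2 →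
        ∀ (hA : ((posSemidefSqrt hSig.posSemidef)⁻¹ * Shat *
            (posSemidefSqrt hSig.posSemidef)⁻¹).IsHermitian),
        1 - ε ≤ Real.sqrt (specMin ((posSemidefSqrt hSig.posSemidef)⁻¹ * Shat *
            (posSemidefSqrt hSig.posSemidef)⁻¹) hA) →
        Real.sqrt (specMax ((posSemidefSqrt hSig.posSemidef)⁻¹ * Shat *
            (posSemidefSqrt hSig.posSemidef)⁻¹) hA) ≤ 1 + ε →
        ∀ (hA1 : ((posSemidefSqrt hSig1.posSemidef)⁻¹ * Shat1 *
            (posSemidefSqrt hSig1.posSemidef)⁻¹).IsHermitian),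
        1 - ε ≤ Real.sqrt (specMin ((posSemidefSqrt hSig1.posSemidef)⁻¹ * Shat1 *
            (posSemidefSqrt hSig1.posSemidef)⁻¹) hA1) →
        Real.sqrt (specMax ((posSemidefSqrt hSig1.posSemidef)⁻¹ * Shat1 *
            (posSemidefSqrt hSig1.posSemidef)⁻¹) hA1) ≤ 1 + ε →
        -- μ = E[xy], R = D† - Σ⁻¹ and R̂ = D̂† - Σ̂⁻¹
        ∀ (μv : Fin (d₁ + d₂) → ℝ), (μv = fun i => ∫ ω, x ω i * y ω ∂μ) →
        ∀ (R Rhat : Matrix (Fin (d₁ + d₂)) (Fin (d₁ + d₂)) ℝ),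
        (R = (Matrix.of fun i j : Fin (d₁ + d₂) =>
          if h : (i : ℕ) < d₁ ∧ (j : ℕ) < d₁ then Sig1⁻¹ ⟨i, h.1⟩ ⟨j, h.2⟩ else 0)
            - Sig⁻¹) →
        (Rhat = (Matrix.of fun i j : Fin (d₁ + d₂) =>
          if h : (i : ℕ) < d₁ ∧ (j : ℕ) < d₁ then Shat1⁻¹ ⟨i, h.1⟩ ⟨j, h.2⟩ else 0)
            - Shat⁻¹) →
        |μv ⬝ᵥ (Rhat * Shat * Rhat).mulVec μv - μv ⬝ᵥ (R * Sig * R).mulVec μv| ≤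
          (1 / 8) * (μv ⬝ᵥ (R * Sig * R).mulVec μv) +
            C * (specMax Sig hSig.1 / specMin Sig hSig.1 ^ 2) *
              (∑ i, μv i ^ 2) * ε ^ 2 := by
  refine ⟨50000, by norm_num, ?_⟩
  intro Ω _ μ _ d₁ d₂ hd₁ hd₂ x y hxx hxy Sig hSigdef Sig1 hSig1def hSig hSig1
    Shat Shat1 hShat hShat1 ε hε0 hε hA hmin hmax hA1 hmin1 hmax1 μv hμv R Rhat hR hRhat
  have : NeZero (d₁ + d₂) := ⟨by omega⟩
  -- extreme eigenvalues of Sig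
  set lam := specMin Sig hSig.1 with hlamdef
  set Lam := specMax Sig hSig.1 with hLamdef
  have hlam : 0 < lam := specMin_pos hSig
  have hSlam : (Sig - lam • (1 : Matrix (Fin (d₁+d₂)) (Fin (d₁+d₂)) ℝ)).PosSemidef :=
    psd_of_le_eig hSig.1 (fun i => specMin_le hSig.1 i)
  have hSLam : (Lam • (1 : Matrix (Fin (d₁+d₂)) (Fin (d₁+d₂)) ℝ) - Sig).PosSemidef :=
    psd_of_eig_le hSig.1 (fun i => le_specMax hSig.1 i)
  have hLam : 0 < Lam := by
    have h0 := hSig.eigenvalues_pos (⟨0, by omega⟩ : Fin (d₁+d₂))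
    exact lt_of_lt_of_le h0 (le_specMax hSig.1 _)
  -- two-sided Loewner bounds from the spectral-approximation hypotheses
  obtain ⟨hblo, hbhi⟩ := spec_to_psd hSig hε0 hε hA hmin hmax
  have hup : (Shat - (1-ε)^2 • Sig).PosSemidef := conj_back hSig hblo
  have hdo : ((1+ε)^2 • Sig - Shat).PosSemidef := conj_back' hSig hbhi
  obtain ⟨hblo1, hbhi1⟩ := spec_to_psd hSig1 hε0 hε hA1 hmin1 hmax1
  have hup1 : (Shat1 - (1-ε)^2 • Sig1).PosSemidef := conj_back hSig1 hblo1
  have hdo1 : ((1+ε)^2 • Sig1 - Shat1).PosSemidef := conj_back' hSig1 hbhi1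
  -- Sig1 inherits the lower bound lam
  have hSig1lam : (Sig1 - lam • (1 : Matrix (Fin d₁) (Fin d₁) ℝ)).PosSemidef :=
    block_psd hSig1.1 hSig1def hSlam
  -- Shat, Shat1 are positive definite
  have h1e : (0:ℝ) < (1-ε)^2 := by nlinarith
  have hc1pos : (0:ℝ) < (1-ε)^2 * lam := mul_pos h1e hlam
  have hShat_pd : Shat.PosDef := by
    refine posdef_of_psd_sub hShat hc1pos ?_
    have heq : Shat - ((1-ε)^2*lam) • (1 : Matrix (Fin (d₁+d₂)) (Fin (d₁+d₂)) ℝ)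
        = (Shat - (1-ε)^2 • Sig)
          + (1-ε)^2 • (Sig - lam • (1 : Matrix (Fin (d₁+d₂)) (Fin (d₁+d₂)) ℝ)) := by
      module
    rw [heq]
    exact hup.add (psd_smul hSlam (sq_nonneg _))
  have hShat1_pd : Shat1.PosDef := by
    refine posdef_of_psd_sub hShat1 hc1pos ?_
    have heq : Shat1 - ((1-ε)^2*lam) • (1 : Matrix (Fin d₁) (Fin d₁) ℝ)
        = (Shat1 - (1-ε)^2 • Sig1)
          + (1-ε)^2 • (Sig1 - lam • (1 : Matrix (Fin d₁) (Fin d₁) ℝ)) := by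
      module
    rw [heq]
    exact hup1.add (psd_smul hSig1lam (sq_nonneg _))
  -- identify R, Rhat with emb-differences
  have hR' : R = emb d₂ Sig1⁻¹ - Sig⁻¹ := hR
  have hRhat' : Rhat = emb d₂ Shat1⁻¹ - Shat⁻¹ := hRhat
  have hRh : R.IsHermitian := by
    rw [hR']; exact (emb_herm hSig1.inv.1).sub hSig.inv.1
  have hRhath : Rhat.IsHermitian := by
    rw [hRhat']; exact (emb_herm hShat1_pd.inv.1).sub hShat_pd.inv.1
  -- abbreviations
  set m : Fin (d₁+d₂) → ℝ := μv with hm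
  set a : Fin (d₁+d₂) → ℝ := R *ᵥ m with ha
  set b : Fin (d₁+d₂) → ℝ := Rhat *ᵥ m with hb
  set Δ : Fin (d₁+d₂) → ℝ := b - a with hΔdef
  set N : ℝ := m ⬝ᵥ m with hN
  set Q : ℝ := a ⬝ᵥ Sig *ᵥ a with hQ
  -- rewrite the goal
  have hQr : m ⬝ᵥ (R * Sig * R) *ᵥ m = Q := by
    rw [hQ, ha, ← mulVec_mulVec, ← mulVec_mulVec, dot_shift hRh]
  have hQhr : m ⬝ᵥ (Rhat * Shat * Rhat) *ᵥ m = b ⬝ᵥ Shat *ᵥ b := by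
    rw [hb, ← mulVec_mulVec, ← mulVec_mulVec, dot_shift hRhath]
  have hNsum : (∑ i, m i ^ 2) = N := by
    rw [hN]
    simp only [dotProduct]
    exact Finset.sum_congr rfl (fun i _ => pow_two _)
  rw [hQr, hQhr, hNsum]
  -- basic positivity
  have hQ0 : 0 ≤ Q := quad_psd hSig.posSemidef a
  have hN0 : 0 ≤ N := dot_self_nonneg m
  -- decomposition
  have hba : b = a + Δ := by rw [hΔdef]; abel
  have hShatSym := hShat
  have hexp : b ⬝ᵥ Shat *ᵥ b
      = a ⬝ᵥ Shat *ᵥ a + 2*(a ⬝ᵥ Shat *ᵥ Δ) + Δ ⬝ᵥ Shat *ᵥ Δ := by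
    rw [hba]
    have hsym : Δ ⬝ᵥ Shat *ᵥ a = a ⬝ᵥ Shat *ᵥ Δ := by
      rw [dot_shift hShat, dotProduct_comm]
    simp only [mulVec_add, dotProduct_add, add_dotProduct]
    rw [hsym]; ring
  -- quadratic bounds through Sig
  have haSu : a ⬝ᵥ Shat *ᵥ a ≤ (1+ε)^2 * Q := by
    have := quad_le hdo a
    rwa [quad_smul] at this
  have haSl : (1-ε)^2 * Q ≤ a ⬝ᵥ Shat *ᵥ a := by
    have := quad_le hup a
    rwa [quad_smul] at this
  have hΔSig0 : 0 ≤ Δ ⬝ᵥ Sig *ᵥ Δ := quad_psd hSig.posSemidef Δ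
  have hΔSu : Δ ⬝ᵥ Shat *ᵥ Δ ≤ (1+ε)^2 * (Δ ⬝ᵥ Sig *ᵥ Δ) := by
    have := quad_le hdo Δ
    rwa [quad_smul] at this
  have hΔS0 : 0 ≤ Δ ⬝ᵥ Shat *ᵥ Δ := quad_psd hShat_pd.posSemidef Δ
  have haS0 : 0 ≤ a ⬝ᵥ Shat *ᵥ a := quad_psd hShat_pd.posSemidef a
  have hΔSigLam : Δ ⬝ᵥ Sig *ᵥ Δ ≤ Lam * (Δ ⬝ᵥ Δ) := by
    have := quad_le hSLam Δ
    rwa [quad_smul, one_mulVec] at this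
  have hCS := cs_bound hShat_pd.posSemidef a Δ (show (0:ℝ) < 1/64 by norm_num)
  -- norm bound on Δ
  set K : ℝ := ε^2/lam^2 * N with hK
  have hK0 : 0 ≤ K := by
    rw [hK]; positivity
  have hdiff_big : ((Shat⁻¹ - Sig⁻¹) *ᵥ m) ⬝ᵥ ((Shat⁻¹ - Sig⁻¹) *ᵥ m) ≤ 64 * K := by
    have := inv_diff_bound hSig hShat hε0 hε hlam hup hdo hSlam m
    rw [hK]; calc _ ≤ 64*ε^2/lam^2 * (m ⬝ᵥ m) := this
      _ = 64 * (ε^2/lam^2 * N) := by rw [← hN]; ring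
  have hdiff_small : ((Shat1⁻¹ - Sig1⁻¹) *ᵥ (res d₂ m)) ⬝ᵥ ((Shat1⁻¹ - Sig1⁻¹) *ᵥ (res d₂ m))
      ≤ 64 * K := by
    have h1 := inv_diff_bound hSig1 hShat1 hε0 hε hlam hup1 hdo1 hSig1lam (res d₂ m)
    have h2 : 64*ε^2/lam^2 * ((res d₂ m) ⬝ᵥ (res d₂ m)) ≤ 64*ε^2/lam^2 * (m ⬝ᵥ m) := by
      apply mul_le_mul_of_nonneg_left (res_dot_le m)
      positivity
    rw [hK]; calc _ ≤ 64*ε^2/lam^2 * ((res d₂ m) ⬝ᵥ (res d₂ m)) := h1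
      _ ≤ 64*ε^2/lam^2 * (m ⬝ᵥ m) := h2
      _ = 64 * (ε^2/lam^2 * N) := by rw [← hN]; ring
  have hΔeq : Δ = (emb d₂ (Shat1⁻¹ - Sig1⁻¹)) *ᵥ m - ((Shat⁻¹ - Sig⁻¹) *ᵥ m) := by
    rw [hΔdef, hb, ha, hR', hRhat', emb_sub]
    simp only [sub_mulVec]
    abel
  have hΔnorm : Δ ⬝ᵥ Δ ≤ 256 * K := by
    have h1 := nsq_sub_le ((emb d₂ (Shat1⁻¹ - Sig1⁻¹)) *ᵥ m) ((Shat⁻¹ - Sig⁻¹) *ᵥ m)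
    rw [← hΔeq] at h1
    have h2 : ((emb d₂ (Shat1⁻¹ - Sig1⁻¹)) *ᵥ m) ⬝ᵥ ((emb d₂ (Shat1⁻¹ - Sig1⁻¹)) *ᵥ m)
        ≤ 64 * K := by
      rw [emb_mulVec, ext_dot]
      exact hdiff_small
    linarith [hdiff_big]
  -- bound on ‖a‖ and hence on Q
  have hSi1u : (lam⁻¹ • (1 : Matrix (Fin d₁) (Fin d₁) ℝ) - Sig1⁻¹).PosSemidef :=
    inv_loewner_upper hSig1 hlam hSig1lam
  have hSiu : (lam⁻¹ • (1 : Matrix (Fin (d₁+d₂)) (Fin (d₁+d₂)) ℝ) - Sig⁻¹).PosSemidef :=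
    inv_loewner_upper hSig hlam hSlam
  have hlaminv0 : (0:ℝ) ≤ lam⁻¹ := inv_nonneg.mpr hlam.le
  have hSiop : (Sig⁻¹ *ᵥ m) ⬝ᵥ (Sig⁻¹ *ᵥ m) ≤ (lam⁻¹)^2 * N := by
    have := op_bound hSig.inv.1 hSiu
      (hSig.inv.posSemidef.add (psd_smul Matrix.PosSemidef.one hlaminv0)) m
    rwa [← hN] at this
  have hSi1op : (Sig1⁻¹ *ᵥ (res d₂ m)) ⬝ᵥ (Sig1⁻¹ *ᵥ (res d₂ m)) ≤ (lam⁻¹)^2 * N := by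
    have h1 := op_bound hSig1.inv.1 hSi1u
      (hSig1.inv.posSemidef.add (psd_smul Matrix.PosSemidef.one hlaminv0)) (res d₂ m)
    have h2 : (lam⁻¹)^2 * ((res d₂ m) ⬝ᵥ (res d₂ m)) ≤ (lam⁻¹)^2 * N := by
      rw [hN]
      exact mul_le_mul_of_nonneg_left (res_dot_le m) (sq_nonneg _)
    linarith
  have haeq : a = (emb d₂ Sig1⁻¹) *ᵥ m - Sig⁻¹ *ᵥ m := by
    rw [ha, hR', sub_mulVec]
  have hanorm : a ⬝ᵥ a ≤ 4 * ((lam⁻¹)^2 * N) := by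
    have h1 := nsq_sub_le ((emb d₂ Sig1⁻¹) *ᵥ m) (Sig⁻¹ *ᵥ m)
    rw [← haeq] at h1
    have h2 : ((emb d₂ Sig1⁻¹) *ᵥ m) ⬝ᵥ ((emb d₂ Sig1⁻¹) *ᵥ m) ≤ (lam⁻¹)^2 * N := by
      rw [emb_mulVec, ext_dot]
      exact hSi1op
    linarith
  have hQle : Q ≤ Lam * (a ⬝ᵥ a) := by
    have := quad_le hSLam a
    rwa [quad_smul, one_mulVec] at this
  have hQ4 : Q ≤ 4 * (Lam * ((lam⁻¹)^2 * N)) := by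
    calc Q ≤ Lam * (a ⬝ᵥ a) := hQle
      _ ≤ Lam * (4 * ((lam⁻¹)^2 * N)) := mul_le_mul_of_nonneg_left hanorm hLam.le
      _ = 4 * (Lam * ((lam⁻¹)^2 * N)) := by ring
  -- combine
  have hLK : Lam * (Δ ⬝ᵥ Δ) ≤ 256 * (Lam * K) :=
    calc Lam * (Δ ⬝ᵥ Δ) ≤ Lam * (256 * K) := mul_le_mul_of_nonneg_left hΔnorm hLam.le
      _ = 256 * (Lam * K) := by ring
  have hLK0 : 0 ≤ Lam * K := mul_nonneg hLam.le hK0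
  have hΔS : Δ ⬝ᵥ Shat *ᵥ Δ ≤ 576 * (Lam * K) := by
    have h94 : (1+ε)^2 ≤ 9/4 := by nlinarith
    calc Δ ⬝ᵥ Shat *ᵥ Δ ≤ (1+ε)^2 * (Δ ⬝ᵥ Sig *ᵥ Δ) := hΔSu
      _ ≤ (9/4) * (Δ ⬝ᵥ Sig *ᵥ Δ) := by nlinarith
      _ ≤ (9/4) * (Lam * (Δ ⬝ᵥ Δ)) := by linarith
      _ ≤ (9/4) * (256 * (Lam * K)) := by linarith
      _ = 576 * (Lam * K) := by ring
  have haS : a ⬝ᵥ Shat *ᵥ a ≤ (9/4) * Q := by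
    have h94 : (1+ε)^2 ≤ 9/4 := by nlinarith
    nlinarith
  -- final case analysis
  have hKQ : ε > 1/32 → Q ≤ 4096 * (Lam * K) := by
    intro hbig
    have h1 : 1 ≤ 1024 * ε^2 := by nlinarith
    have h2 : Lam * K = ε^2 * (Lam * ((lam⁻¹)^2 * N)) := by
      rw [hK]; field_simp
    have h3 : 0 ≤ Lam * ((lam⁻¹)^2 * N) := by positivity
    nlinarith
  have hgoal : |b ⬝ᵥ Shat *ᵥ b - Q| ≤ 1/8 * Q + 50000 * (Lam * K) := by
    rw [hexp]
    exact scalar_final hε0 hε hQ0 hLK0 haSu haSl hΔS0 hΔS hCS hKQ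
  have hfinal : 50000 * (Lam / lam^2) * N * ε^2 = 50000 * (Lam * K) := by
    rw [hK]; field_simp
  calc |b ⬝ᵥ Shat *ᵥ b - Q| ≤ 1/8 * Q + 50000 * (Lam * K) := hgoal
    _ = 1/8 * Q + 50000 * (Lam / lam^2) * N * ε^2 := by rw [hfinal]
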